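/- For every n ≥ 2 and k ≥ 2, there exists a family of 2n+k-4 nonempty sets of edges in the complete bipartite graph K_{n,n} such that the union of any k of them contains a matching of size n, but there is no rainbow matching of size n. Explicitly, with sides {a_1,...,a_n} and {b_1,...,b_n}, take n-1 copies of {a_1b_1,...,a_nb_n}, n-2 copies of {a_1b_2, a_2b_3, ..., a_{n-1}b_n, a_nb_1}, and k-1 copies of the singleton {a_1b_2}. -/

import Mathlib

/-- A set of edges of a bipartite graph (edges given as pairs) is a matching
if distinct edges share no endpoint. -/
def IsMatching {α β : Type*} (M : Set (α × β)) : Prop :=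
  ∀ e ∈ M, ∀ f ∈ M, e ≠ f → e.1 ≠ f.1 ∧ e.2 ≠ f.2

/-- `F` contains a matching of size `n`. -/
def HasMatchingOfSize {α β : Type*} (n : ℕ) (F : Set (α × β)) : Prop :=
  ∃ e : Fin n → α × β, Function.Injective e ∧ (∀ j, e j ∈ F) ∧
    IsMatching (Set.range e)

/-- The family `F` has a rainbow matching of size `n`: `n` pairwise disjoint
edges chosen from `n` distinct members of the family. -/
def HasRainbowMatchingOfSize {α β ι : Type*} (n : ℕ) (F : ι → Set (α × β)) : Prop :=
  ∃ (g : Fin n ↪ ι) (e : Fin n → α × β), Function.Injective e ∧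
    (∀ j, e j ∈ F (g j)) ∧ IsMatching (Set.range e)

/-- Sharpness of the main theorem: for every `n ≥ 2`, `k ≥ 2` there is a
family of `2n+k-4` nonempty edge sets in `K_{n,n}` whose every `k`-union
contains a matching of size `n`, but with no rainbow matching of size `n`. -/
theorem stmt_4 (n k : ℕ) (hn : 2 ≤ n) (hk : 2 ≤ k) :
    ∃ S : Fin (2 * n + k - 4) → Set (Fin n × Fin n),
      (∀ i, (S i).Nonempty) ∧
      (∀ K : Finset (Fin (2 * n + k - 4)), K.card = k →
        HasMatchingOfSize n (⋃ i ∈ K, S i)) ∧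
      ¬ HasRainbowMatchingOfSize n S := by
  haveI : NeZero n := ⟨by omega⟩
  have h10 : (1 : Fin n) ≠ 0 := by rw [Ne, Fin.one_eq_zero_iff]; omega
  set M1 : Set (Fin n × Fin n) := {p | p.2 = p.1} with hM1
  set M2 : Set (Fin n × Fin n) := {p | p.2 = p.1 + 1} with hM2
  set S : Fin (2 * n + k - 4) → Set (Fin n × Fin n) :=
    fun i => if i.val < n - 1 then M1 else if i.val < 2 * n - 3 then M2
      else {((0 : Fin n), (1 : Fin n))} with hS
  -- the two matchings
  have hmatch1 : HasMatchingOfSize n M1 := by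
    refine ⟨fun j => (j, j), fun a b h => congrArg Prod.fst h, fun j => rfl, ?_⟩
    rintro _ ⟨a, rfl⟩ _ ⟨b, rfl⟩ hne
    have : a ≠ b := fun h => hne (by rw [h])
    exact ⟨this, this⟩
  have hmatch2 : HasMatchingOfSize n M2 := by
    refine ⟨fun j => (j, j + 1), fun a b h => congrArg Prod.fst h, fun j => rfl, ?_⟩
    rintro _ ⟨a, rfl⟩ _ ⟨b, rfl⟩ hne
    have hab : a ≠ b := fun h => hne (by rw [h])
    exact ⟨hab, fun h => hab (add_right_cancel h)⟩
  have hsub : ∀ (i) (F : Set (Fin n × Fin n)), S i ⊆ F → HasMatchingOfSize n (S i) →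
      HasMatchingOfSize n F := by
    rintro i F hsub ⟨e, h1, h2, h3⟩
    exact ⟨e, h1, fun j => hsub (h2 j), h3⟩
  refine ⟨S, ?_, ?_, ?_⟩
  · intro i
    simp only [hS]
    split_ifs
    · exact ⟨(0, 0), rfl⟩
    · exact ⟨(0, 0 + 1), rfl⟩
    · exact ⟨(0, 1), rfl⟩
  · intro K hK
    -- find i ∈ K which is not a singleton index
    have : ∃ i ∈ K, i.val < 2 * n - 3 := by
      by_contra h
      push_neg at h
      have hcard : K.card ≤ (Finset.Ico (2 * n - 3) (2 * n + k - 4)).card := by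
        apply Finset.card_le_card_of_injOn (fun i => i.val)
        · intro i hi
          simp only [Finset.coe_Ico, Set.mem_Ico]
          exact ⟨h i hi, i.isLt⟩
        · intro a _ b _ hab
          exact Fin.ext hab
      rw [Nat.card_Ico] at hcard
      omega
    obtain ⟨i, hiK, hi⟩ := this
    have hSsub : S i ⊆ ⋃ j ∈ K, S j := Set.subset_biUnion_of_mem hiK
    by_cases h1 : i.val < n - 1
    · refine hsub i _ hSsub ?_
      simp only [hS]
      simp only [h1, if_pos]
      exact hmatch1
    · refine hsub i _ hSsub ?_
      simp only [hS]
      simp only [h1, if_neg, hi, if_pos, if_false]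
      exact hmatch2
  · rintro ⟨g, e, einj, emem, ematch⟩
    -- first coordinates and second coordinates are injective
    have hfst : Function.Injective fun j => (e j).1 := by
      intro a b hab
      by_contra hne
      have hene : e a ≠ e b := fun h => hne (einj h)
      exact (ematch (e a) ⟨a, rfl⟩ (e b) ⟨b, rfl⟩ hene).1 hab
    have hsnd : Function.Injective fun j => (e j).2 := by
      intro a b hab
      by_contra hne
      have hene : e a ≠ e b := fun h => hne (einj h)
      exact (ematch (e a) ⟨a, rfl⟩ (e b) ⟨b, rfl⟩ hene).2 hab
    -- each edge is diagonal or shifted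
    have hcases : ∀ j, (e j).2 = (e j).1 ∨ (e j).2 = (e j).1 + 1 := by
      intro j
      have hm := emem j
      simp only [hS] at hm
      split_ifs at hm with h1 h2
      · exact Or.inl hm
      · exact Or.inr hm
      · right
        rw [Set.mem_singleton_iff] at hm
        rw [hm]
        simp
    -- sum argument
    have hb1 : Function.Bijective fun j => (e j).1 :=
      Finite.injective_iff_bijective.mp hfst
    have hb2 : Function.Bijective fun j => (e j).2 :=
      Finite.injective_iff_bijective.mp hsnd
    have hsum1 : ∑ j, (e j).1 = ∑ x : Fin n, id x :=
      Fintype.sum_bijective _ hb1 _ id (fun _ => rfl)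
    have hsum2 : ∑ j, (e j).2 = ∑ x : Fin n, id x :=
      Fintype.sum_bijective _ hb2 _ id (fun _ => rfl)
    have hzero : ∑ j, ((e j).2 - (e j).1) = 0 := by
      rw [Finset.sum_sub_distrib, hsum1, hsum2, sub_self]
    set B : Finset (Fin n) := Finset.univ.filter (fun j => (e j).2 = (e j).1 + 1) with hB
    letI := Fin.instCommRing n
    have hsumB : ∑ j, ((e j).2 - (e j).1) = (B.card : Fin n) := by
      rw [← Finset.sum_filter_add_sum_filter_not Finset.univ
        (fun j => (e j).2 = (e j).1 + 1) (fun j => (e j).2 - (e j).1)]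
      have h1 : ∑ j ∈ B, ((e j).2 - (e j).1) = ∑ _j ∈ B, (1 : Fin n) := by
        apply Finset.sum_congr rfl
        intro j hj
        rw [hB, Finset.mem_filter] at hj
        rw [hj.2]
        ring
      have h2 : ∑ j ∈ Finset.univ.filter (fun j => ¬((e j).2 = (e j).1 + 1)),
          ((e j).2 - (e j).1) = 0 := by
        apply Finset.sum_eq_zero
        intro j hj
        rw [Finset.mem_filter] at hj
        rcases hcases j with h | h
        · rw [h, sub_self]
        · exact absurd h hj.2
      rw [h1, h2, Finset.sum_const, add_zero, nsmul_eq_mul, mul_one]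
    have hdvd : n ∣ B.card := by
      rw [← Fin.natCast_eq_zero, ← hsumB]
      exact hzero
    have hBle : B.card ≤ n := le_trans (Finset.card_filter_le _ _) (by simp)
    rcases Nat.eq_zero_or_pos B.card with hB0 | hBpos
    · -- all edges diagonal: all indices in first block of size n-1
      have hdiag : ∀ j, (e j).2 = (e j).1 := by
        intro j
        rcases hcases j with h | h
        · exact h
        · exfalso
          have : j ∈ B := by rw [hB, Finset.mem_filter]; exact ⟨Finset.mem_univ j, h⟩
          rw [Finset.card_eq_zero.mp hB0] at this
          exact absurd this (Finset.notMem_empty j)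
      have hglt : ∀ j, ((g : Fin n → Fin (2 * n + k - 4)) j).val < n - 1 := by
        intro j
        by_contra hlt
        have hm := emem j
        simp only [hS] at hm
        split_ifs at hm with h1
        · have h2 : (e j).2 = (e j).1 + 1 := hm
          rw [hdiag j] at h2
          exact h10 (left_eq_add.mp h2)
        · rw [Set.mem_singleton_iff] at hm
          have := hdiag j
          rw [hm] at this
          exact h10 this
      -- injection Fin n ↪ Fin (n-1)
      have : n ≤ n - 1 := by
        have := Fintype.card_le_of_injective
          (fun j : Fin n => (⟨((g : Fin n → Fin (2 * n + k - 4)) j).val, hglt j⟩ : Fin (n - 1)))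
          (by
            intro a b hab
            apply g.injective
            simp only [Fin.mk.injEq] at hab
            exact Fin.ext hab)
        simpa using this
      omega
    · -- B.card = n : all edges shifted
      have hBn : B.card = n := le_antisymm hBle (Nat.le_of_dvd hBpos hdvd)
      have hBuniv : B = Finset.univ := Finset.eq_univ_of_card B (by rw [hBn]; simp)
      have hshift : ∀ j, (e j).2 = (e j).1 + 1 := by
        intro j
        have : j ∈ B := hBuniv ▸ Finset.mem_univ j
        rw [hB, Finset.mem_filter] at this
        exact this.2
      have hgnot1 : ∀ j, ¬ ((g : Fin n → Fin (2 * n + k - 4)) j).val < n - 1 := by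
        intro j hlt
        have hm := emem j
        simp only [hS, if_pos hlt, hM1, Set.mem_setOf_eq, hshift j] at hm
        exact h10 (left_eq_add.mp hm.symm)
      -- at most one j in the singleton range
      have hsing : ∀ j, ¬ ((g : Fin n → Fin (2 * n + k - 4)) j).val < 2 * n - 3 →
          e j = ((0 : Fin n), (1 : Fin n)) := by
        intro j hj
        have hm := emem j
        simp only [hS, if_neg (hgnot1 j), if_neg hj, Set.mem_singleton_iff] at hm
        exact hm
      set A : Finset (Fin n) := Finset.univ.filter
        (fun j => ((g : Fin n → Fin (2 * n + k - 4)) j).val < 2 * n - 3) with hA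
      have hAcompl : (Finset.univ \ A).card ≤ 1 := by
        rw [Finset.card_le_one]
        intro a ha b hb
        rw [hA, Finset.mem_sdiff, Finset.mem_filter] at ha hb
        have ha' := hsing a (fun h => ha.2 ⟨Finset.mem_univ a, h⟩)
        have hb' := hsing b (fun h => hb.2 ⟨Finset.mem_univ b, h⟩)
        exact einj (ha'.trans hb'.symm)
      have hAcard : n - 1 ≤ A.card := by
        have h1 : A ⊆ Finset.univ := Finset.filter_subset _ _
        have := Finset.card_sdiff_add_card_eq_card h1
        have hu : (Finset.univ : Finset (Fin n)).card = n := by simp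
        omega
      have hAle : A.card ≤ n - 2 := by
        have := Finset.card_le_card_of_injOn (fun j => ((g : Fin n → Fin (2 * n + k - 4)) j).val)
          (s := A) (t := Finset.Ico (n - 1) (2 * n - 3))
          (by
            intro j hj
            rw [Finset.mem_coe, hA, Finset.mem_filter] at hj
            simp only [Finset.coe_Ico, Set.mem_Ico]
            exact ⟨Nat.le_of_not_lt (hgnot1 j), hj.2⟩)
          (by
            intro a _ b _ hab
            exact g.injective (Fin.ext hab))
        rw [Nat.card_Ico] at this
        omega
      omega
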